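/- Let n ≥ 1, let F ⊆ ℝⁿ be a finite set, and let Ω be the interior of the convex hull of F; assume Ω ≠ ∅. Let T = {z ∈ ℂⁿ : Im z ∈ Ω} be the open tube over Ω and T̄ = {z ∈ ℂⁿ : Im z ∈ convexHull ℝ F} the closed tube. If f : ℂⁿ → ℂ is continuous on T̄, bounded on T̄, and holomorphic on T, then sup_{z ∈ T̄} |f(z)| = sup_{z ∈ T̄, Im z ∈ extremePoints(convexHull ℝ F)} |f(z)|. (This is Lemma 2.2: on a tube over a bounded convex polyhedron, the supremum of a bounded holomorphic function is attained over the distinguished boundary, the tube over the extreme points of the base.) -/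

import Mathlib

open Real Set Filter Complex Topology


lemma strip_diffContOnCl
    {n : ℕ} {K : Set (Fin n → ℝ)} (hKconv : Convex ℝ K) {u : Fin n → ℝ}
    (hu : u ∈ interior K)
    {f : (Fin n → ℂ) → ℂ}
    (hcont : ContinuousOn f {z : Fin n → ℂ | (fun j => (z j).im) ∈ K})
    (hhol : DifferentiableOn ℂ f {z : Fin n → ℂ | (fun j => (z j).im) ∈ interior K})
    (z : Fin n → ℂ) (v : Fin n → ℝ) (a b : ℝ)
    (hseg : ∀ s ∈ Set.Icc a b, (fun j => (z j).im + s * v j) ∈ K) :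
    DiffContOnCl ℂ (fun w => f (fun j => z j + (w * (v j : ℂ))))
      (Complex.im ⁻¹' Set.Ioo a b) := by
  classical
  have hImcont : Continuous (fun z : Fin n → ℂ => (fun j => (z j).im)) :=
    continuous_pi fun j => Complex.continuous_im.comp (continuous_apply j)
  have hTopen : IsOpen {z : Fin n → ℂ | (fun j => (z j).im) ∈ interior K} :=
    isOpen_interior.preimage hImcont
  set p : ℝ → ℂ → Fin n → ℂ :=
    fun ε w j => ((1 - ε : ℝ) : ℂ) * (z j + w * (v j : ℂ)) + ((ε * u j : ℝ) : ℂ) * Complex.I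
    with hp
  have him : ∀ ε w, (fun j => ((p ε w) j).im)
      = fun j => (1 - ε) * ((z j).im + w.im * v j) + ε * u j := by
    intro ε w
    funext j
    simp [hp, Complex.add_im, Complex.mul_im]
  -- membership in closed tube
  have mem1 : ∀ ε ∈ Set.Icc (0:ℝ) 1, ∀ w : ℂ, w.im ∈ Set.Icc a b →
      (fun j => ((p ε w) j).im) ∈ K := by
    intro ε hε w hw
    rw [him]
    have hq := hseg w.im hw
    have : (fun j => (1 - ε) * ((z j).im + w.im * v j) + ε * u j)
        = (1 - ε) • (fun j => (z j).im + w.im * v j) + ε • u := by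
      funext j; simp [Pi.smul_apply, smul_eq_mul]
    rw [this]
    exact hKconv hq (interior_subset hu) (by linarith [hε.2]) hε.1 (by ring)
  -- membership in open tube for ε > 0
  have mem2 : ∀ ε ∈ Set.Ioc (0:ℝ) 1, ∀ w : ℂ, w.im ∈ Set.Icc a b →
      (fun j => ((p ε w) j).im) ∈ interior K := by
    intro ε hε w hw
    rw [him]
    have hq := hseg w.im hw
    have : (fun j => (1 - ε) * ((z j).im + w.im * v j) + ε * u j)
        = (1 - ε) • (fun j => (z j).im + w.im * v j) + ε • u := by
      funext j; simp [Pi.smul_apply, smul_eq_mul]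
    rw [this]
    exact hKconv.combo_self_interior_mem_interior hq hu (by linarith [hε.2]) hε.1 (by ring)
  -- differentiability of the approximants
  have hpdiff : ∀ ε : ℝ, Differentiable ℂ (fun w => p ε w) := by
    intro ε
    apply differentiable_pi.mpr
    intro j
    exact ((differentiable_id.mul_const _).const_add _).const_mul _ |>.add_const _
  have hstrip_open : IsOpen (Complex.im ⁻¹' Set.Ioo a b) :=
    isOpen_Ioo.preimage Complex.continuous_im
  -- joint continuity of the family
  have hFcont : ContinuousOn (fun q : ℝ × ℂ => f (p q.1 q.2))
      (Set.Icc (0:ℝ) 1 ×ˢ (Complex.im ⁻¹' Set.Icc a b)) := by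
    apply hcont.comp
    · apply Continuous.continuousOn
      apply continuous_pi
      intro j
      fun_prop
    · rintro ⟨ε, w⟩ ⟨hε, hw⟩
      exact mem1 ε hε w hw
  haveI : (𝓝[Set.Ioc (0:ℝ) 1] 0).NeBot := by
    apply mem_closure_iff_nhdsWithin_neBot.mp
    rw [closure_Ioc one_ne_zero.symm]
    exact Set.left_mem_Icc.mpr zero_le_one
  -- locally uniform convergence on the open strip
  have htlu : TendstoLocallyUniformlyOn (fun ε w => f (p ε w))
      (fun w => f (fun j => z j + (w * (v j : ℂ)))) (𝓝[Set.Ioc (0:ℝ) 1] 0)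
      (Complex.im ⁻¹' Set.Ioo a b) := by
    rw [tendstoLocallyUniformlyOn_iff_forall_isCompact hstrip_open]
    intro Kc hKc hKcc
    have hKc' : Kc ⊆ Complex.im ⁻¹' Set.Icc a b :=
      hKc.trans (Set.preimage_mono Set.Ioo_subset_Icc_self)
    have huc : UniformContinuousOn (fun q : ℝ × ℂ => f (p q.1 q.2))
        (Set.Icc (0:ℝ) 1 ×ˢ Kc) :=
      (isCompact_Icc.prod hKcc).uniformContinuousOn_of_continuous
        (hFcont.mono (Set.prod_mono_right hKc'))
    have h0 : (0:ℝ) ∈ Set.Icc (0:ℝ) 1 := Set.left_mem_Icc.mpr zero_le_one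
    have h1 := UniformContinuousOn.tendstoUniformlyOn (F := fun ε w => f (p ε w)) huc h0
    have hp0 : (fun w => f (p 0 w)) = fun w => f (fun j => z j + (w * (v j : ℂ))) := by
      funext w
      congr 1
      funext j
      simp [hp]
    rw [hp0] at h1
    intro U hU
    exact (h1 U hU).filter_mono (nhdsWithin_mono _ Set.Ioc_subset_Icc_self)
  constructor
  · apply htlu.differentiableOn _ hstrip_open
    filter_upwards [self_mem_nhdsWithin] with ε hε
    intro w hw
    apply DifferentiableAt.differentiableWithinAt
    have hfd : DifferentiableAt ℂ f (p ε w) := by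
      apply hhol.differentiableAt (hTopen.mem_nhds _)
      exact mem2 ε hε w (Set.mem_Icc_of_Ioo hw)
    exact hfd.comp w ((hpdiff ε) w)
  · have hclos : closure (Complex.im ⁻¹' Set.Ioo a b) ⊆ Complex.im ⁻¹' Set.Icc a b :=
      closure_minimal (Set.preimage_mono Set.Ioo_subset_Icc_self)
        (isClosed_Icc.preimage Complex.continuous_im)
    apply ContinuousOn.mono _ hclos
    apply hcont.comp
    · apply Continuous.continuousOn
      apply continuous_pi
      intro j
      fun_prop
    · intro w hw
      have : (fun j => (z j + w * (v j : ℂ)).im) = fun j => (z j).im + w.im * v j := by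
        funext j; simp [Complex.add_im, Complex.mul_im]
      show (fun j => (z j + w * (v j : ℂ)).im) ∈ K
      rw [this]
      exact hseg w.im hw

/-- Lemma 2.2: on the tube over a bounded convex polyhedron, the supremum of a
bounded holomorphic function (continuous up to the boundary) is attained over the
distinguished boundary, i.e. the tube over the extreme points of the base. -/
theorem sup_on_tube_eq_sup_on_distinguished_boundary
    (n : ℕ) (hn : 1 ≤ n) (F : Set (Fin n → ℝ)) (hF : F.Finite)
    (hΩ : (interior (convexHull ℝ F)).Nonempty)
    (f : (Fin n → ℂ) → ℂ)
    (hcont : ContinuousOn f {z : Fin n → ℂ | (fun j => (z j).im) ∈ convexHull ℝ F})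
    (hbdd : ∃ M : ℝ, ∀ z ∈ {z : Fin n → ℂ | (fun j => (z j).im) ∈ convexHull ℝ F},
        ‖f z‖ ≤ M)
    (hhol : DifferentiableOn ℂ f
        {z : Fin n → ℂ | (fun j => (z j).im) ∈ interior (convexHull ℝ F)}) :
    sSup ((fun z => ‖f z‖) ''
        {z : Fin n → ℂ | (fun j => (z j).im) ∈ convexHull ℝ F}) =
    sSup ((fun z => ‖f z‖) ''
        {z : Fin n → ℂ | (fun j => (z j).im) ∈ Set.extremePoints ℝ (convexHull ℝ F)}) := by
  classical
  set K := convexHull ℝ F with hK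
  have hKconv : Convex ℝ K := convex_convexHull ℝ F
  have hKcomp : IsCompact K := hF.isCompact_convexHull ℝ
  obtain ⟨u, hu⟩ := hΩ
  set E := Set.extremePoints ℝ K with hE
  have hEF : E ⊆ F := extremePoints_convexHull_subset
  have hEK : E ⊆ K := extremePoints_subset
  have hEfin : E.Finite := hF.subset hEF
  have hKE : convexHull ℝ E = K := by
    have h1 := closure_convexHull_extremePoints hKcomp hKconv
    rwa [IsClosed.closure_eq ((hEfin.isCompact_convexHull ℝ).isClosed)] at h1
  obtain ⟨M, hM⟩ := hbdd
  set S := sSup ((fun z => ‖f z‖) ''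
      {z : Fin n → ℂ | (fun j => (z j).im) ∈ E}) with hS
  have hDBsub : {z : Fin n → ℂ | (fun j => (z j).im) ∈ E}
      ⊆ {z : Fin n → ℂ | (fun j => (z j).im) ∈ K} := fun z hz => hEK hz
  have hbddS : BddAbove ((fun z => ‖f z‖) ''
      {z : Fin n → ℂ | (fun j => (z j).im) ∈ E}) := by
    refine ⟨M, ?_⟩
    rintro r ⟨z, hz, rfl⟩
    exact hM z (hDBsub hz)
  have hbddA : BddAbove ((fun z => ‖f z‖) ''
      {z : Fin n → ℂ | (fun j => (z j).im) ∈ K}) := by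
    refine ⟨M, ?_⟩
    rintro r ⟨z, hz, rfl⟩
    exact hM z hz
  have hextbound : ∀ z' : Fin n → ℂ, (fun j => (z' j).im) ∈ E →
      ‖f z'‖ ≤ S := fun z' hz' => le_csSup hbddS ⟨z', hz', rfl⟩
  -- key claim by induction on finite subsets of E
  have key : ∀ G : Finset (Fin n → ℝ), ↑G ⊆ E → ∀ z : Fin n → ℂ,
      (fun j => (z j).im) ∈ convexHull ℝ (↑G : Set (Fin n → ℝ)) →
      ‖f z‖ ≤ S := by
    intro G
    induction G using Finset.induction_on with
    | empty => intro _ z hz; simp at hz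
    | @insert e G' hnot IH =>
      intro hsub z hz
      have heE : e ∈ E := hsub (Finset.mem_insert_self e G')
      have hsub' : (↑G' : Set (Fin n → ℝ)) ⊆ E := by
        intro x hx
        exact hsub (by exact_mod_cast Finset.mem_insert_of_mem (by exact_mod_cast hx))
      rcases G'.eq_empty_or_nonempty with rfl | hG'ne
      · apply hextbound z
        rw [show (↑(insert e (∅ : Finset (Fin n → ℝ))) : Set (Fin n → ℝ)) = {e} by simp,
          convexHull_singleton] at hz
        rw [hz]; exact heE
      · rw [Finset.coe_insert,
          convexHull_insert (by exact_mod_cast hG'ne : (↑G' : Set (Fin n → ℝ)).Nonempty),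
          mem_convexJoin] at hz
        obtain ⟨a, ha, y, hy, hzseg⟩ := hz
        rw [Set.mem_singleton_iff] at ha
        have ha' : e = a := ha.symm
        subst ha'
        obtain ⟨ta, tb, hta, htb, htab, hsum⟩ := hzseg
        have hyK : y ∈ K := convexHull_min (hsub'.trans hEK) hKconv hy
        have heK : e ∈ K := hEK heE
        rcases eq_or_lt_of_le hta with hta0 | hta'
        · apply IH hsub' z
          have hxy : (fun j => (z j).im) = y := by
            funext j
            have h := congrFun hsum j
            simp only [Pi.add_apply, Pi.smul_apply, smul_eq_mul] at h
            have htb1 : tb = 1 := by linarith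
            rw [← h, ← hta0, htb1]; ring
          rw [hxy]; exact hy
        rcases eq_or_lt_of_le htb with htb0 | htb'
        · apply hextbound z
          have hxe : (fun j => (z j).im) = e := by
            funext j
            have h := congrFun hsum j
            simp only [Pi.add_apply, Pi.smul_apply, smul_eq_mul] at h
            have hta1 : ta = 1 := by linarith
            rw [← h, ← htb0, hta1]; ring
          rw [hxe]; exact heE
        -- main case: 0 < ta, 0 < tb
        set v : Fin n → ℝ := fun j => e j - y j with hv
        have hseg : ∀ s ∈ Set.Icc (-ta) tb,
            (fun j => (z j).im + s * v j) ∈ K := by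
          intro s hs
          have hrw : (fun j => (z j).im + s * v j) = (ta + s) • e + (tb - s) • y := by
            funext j
            have h := congrFun hsum j
            simp only [Pi.add_apply, Pi.smul_apply, smul_eq_mul] at h ⊢
            simp only [hv]
            linear_combination -h
          rw [hrw]
          exact hKconv heK hyK (by linarith [hs.1]) (by linarith [hs.2]) (by linarith)
        have hd := strip_diffContOnCl hKconv hu hcont hhol z v (-ta) tb hseg
        have himval : ∀ w : ℂ, (fun j => (z j + w * (v j : ℂ)).im)
            = fun j => (z j).im + w.im * v j := by
          intro w; funext j; simp [Complex.add_im, Complex.mul_im]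
        have hB : ∃ c < π / (tb - -ta), ∃ B,
            (fun w => f (fun j => z j + (w * (v j : ℂ)))) =O[Filter.comap
              (_root_.abs ∘ Complex.re) Filter.atTop ⊓ 𝓟 (Complex.im ⁻¹' Set.Ioo (-ta) tb)]
              fun w => Real.exp (B * Real.exp (c * |w.re|)) := by
          refine ⟨0, div_pos Real.pi_pos (by linarith), |M|, ?_⟩
          rw [Asymptotics.isBigO_iff]
          refine ⟨1, ?_⟩
          rw [Filter.eventually_inf_principal]
          apply Filter.Eventually.of_forall
          intro w hw
          have hmem : (fun j => (z j + w * (v j : ℂ)).im) ∈ K := by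
            rw [himval w]
            exact hseg w.im (Set.mem_Icc_of_Ioo hw)
          have h1 : ‖f (fun j => z j + w * (v j : ℂ))‖ ≤ M := hM _ hmem
          have h2 : M ≤ Real.exp |M| := by
            have := Real.add_one_le_exp |M|
            have := le_abs_self M
            linarith
          simp only [Real.norm_eq_abs, zero_mul, Real.exp_zero,
            mul_one, Real.abs_exp, one_mul]
          exact h1.trans h2
        have hle_a : ∀ w : ℂ, w.im = -ta →
            ‖f (fun j => z j + (w * (v j : ℂ)))‖ ≤ S := by
          intro w hwim
          apply IH hsub' _
          have : (fun j => (z j + w * (v j : ℂ)).im) = y := by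
            rw [himval w, hwim]
            funext j
            have h := congrFun hsum j
            simp only [Pi.add_apply, Pi.smul_apply, smul_eq_mul] at h
            simp only [hv]
            linear_combination -h + y j * htab
          rw [this]; exact hy
        have hle_b : ∀ w : ℂ, w.im = tb →
            ‖f (fun j => z j + (w * (v j : ℂ)))‖ ≤ S := by
          intro w hwim
          apply hextbound
          have : (fun j => (z j + w * (v j : ℂ)).im) = e := by
            rw [himval w, hwim]
            funext j
            have h := congrFun hsum j
            simp only [Pi.add_apply, Pi.smul_apply, smul_eq_mul] at h
            simp only [hv]
            linear_combination -h + e j * htab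
          rw [this]; exact heE
        have hPL := PhragmenLindelof.horizontal_strip (z := (0:ℂ)) hd hB hle_a hle_b
          (by simp [hta'.le] : -ta ≤ (0:ℂ).im) (by simp [htb'.le] : (0:ℂ).im ≤ tb)
        have h0 : (fun j => (0:ℂ) + ((0:ℂ) * (v j : ℂ))) = fun j => (0:ℂ) := by
          funext j; ring
        have hz0 : (fun j => z j + ((0:ℂ) * (v j : ℂ))) = z := by
          funext j; ring
        rwa [hz0] at hPL
  -- key applies to all of K
  have key' : ∀ z : Fin n → ℂ, (fun j => (z j).im) ∈ K → ‖f z‖ ≤ S := by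
    intro z hz
    apply key hEfin.toFinset (by simp) z
    rw [hEfin.coe_toFinset, hKE]
    exact hz
  -- nonemptiness witnesses
  obtain ⟨e₀, he₀⟩ : E.Nonempty := hKcomp.extremePoints_nonempty ⟨u, interior_subset hu⟩
  set ze₀ : Fin n → ℂ := fun j => (e₀ j : ℂ) * Complex.I with hze
  have hze₀E : (fun j => (ze₀ j).im) ∈ E := by
    have : (fun j => (ze₀ j).im) = e₀ := by
      funext j; simp [hze]
    rw [this]; exact he₀
  have hDBne : ((fun z => ‖f z‖) ''
      {z : Fin n → ℂ | (fun j => (z j).im) ∈ E}).Nonempty :=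
    ⟨_, ⟨ze₀, hze₀E, rfl⟩⟩
  apply le_antisymm
  · refine csSup_le ⟨‖f ze₀‖, ⟨ze₀, hEK hze₀E, rfl⟩⟩ ?_
    rintro r ⟨z, hz, rfl⟩
    exact key' z hz
  · exact csSup_le_csSup hbddA hDBne (Set.image_mono hDBsub)
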